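/- Let f ∈ L²((0,1)ⁿ) and h ∈ L²((0,1)ᵐ) be non-constant, and define g(x,ξ) = f(x)·h(ξ). Then S^g_{T,x_i} ≥ (1 − f₀²/∫f² dx) · S^f_{T,x_i}, where f₀ = ∫f dx. In particular this lower bound is independent of h. -/

import Mathlib

open MeasureTheory

noncomputable section SobolDefs

/-- Uniform probability measure on the open unit cube `(0,1)^n`. -/
def uCube (n : ℕ) : Measure (Fin n → ℝ) :=
  Measure.pi fun _ => volume.restrict (Set.Ioo 0 1)

/-- Mean value of `f`. -/
def mval {α : Type*} [MeasurableSpace α] (μ : Measure α) (f : α → ℝ) : ℝ := ∫ x, f x ∂μ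

/-- Integral of the square of `f`. -/
def intSq {α : Type*} [MeasurableSpace α] (μ : Measure α) (f : α → ℝ) : ℝ := ∫ x, (f x) ^ 2 ∂μ

/-- Variance of `f`. -/
def var' {α : Type*} [MeasurableSpace α] (μ : Measure α) (f : α → ℝ) : ℝ := intSq μ f - (mval μ f) ^ 2

/-- Covariance of `f` and `h`. -/
def cov' {α : Type*} [MeasurableSpace α] (μ : Measure α) (f h : α → ℝ) : ℝ :=
  (∫ x, f x * h x ∂μ) - mval μ f * mval μ h

/-- Conditional mean of `f` obtained by integrating out the coordinate encoded
by the update map `upd` over `(0,1)`. -/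
def cMean {α : Type*} [MeasurableSpace α] (upd : α → ℝ → α) (f : α → ℝ) (x : α) : ℝ :=
  ∫ t in Set.Ioo (0 : ℝ) 1, f (upd x t)

/-- Total-effect variance of the coordinate encoded by `upd`. -/
def tVar {α : Type*} [MeasurableSpace α] (μ : Measure α) (upd : α → ℝ → α) (f : α → ℝ) : ℝ :=
  intSq μ f - ∫ x, (cMean upd f x) ^ 2 ∂μ

/-- Total Sobol sensitivity index of the coordinate encoded by `upd`. -/
def sobolT {α : Type*} [MeasurableSpace α] (μ : Measure α) (upd : α → ℝ → α) (f : α → ℝ) : ℝ :=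
  tVar μ upd f / var' μ f

/-- Updating the `i`-th coordinate of a point of the cube. -/
def updC {n : ℕ} (i : Fin n) : (Fin n → ℝ) → ℝ → (Fin n → ℝ) :=
  fun x t => Function.update x i t

/-- Updating the `i`-th coordinate of the first component of a product point. -/
def updF {n : ℕ} {β : Type*} (i : Fin n) : ((Fin n → ℝ) × β) → ℝ → ((Fin n → ℝ) × β) :=
  fun p t => (Function.update p.1 i t, p.2)

end SobolDefs

section Aux

noncomputable def nu0 : Measure ℝ := volume.restrict (Set.Ioo 0 1)

instance : IsProbabilityMeasure nu0 := ⟨by simp [nu0]⟩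

lemma uCube_eq (n : ℕ) : uCube n = Measure.pi fun _ => nu0 := rfl

instance (n : ℕ) : IsProbabilityMeasure (uCube n) := by
  rw [uCube_eq]; infer_instance

lemma mp_update {n : ℕ} (i : Fin n) :
    MeasurePreserving (fun p : (Fin n → ℝ) × ℝ => Function.update p.1 i p.2)
      ((uCube n).prod nu0) (uCube n) := by
  refine ⟨measurable_update', ?_⟩
  rw [uCube_eq]
  refine (Measure.pi_eq fun s hs => ?_).symm
  rw [Measure.map_apply measurable_update' (MeasurableSet.univ_pi hs)]
  have hpre : (fun p : (Fin n → ℝ) × ℝ => Function.update p.1 i p.2) ⁻¹' Set.univ.pi s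
      = (Set.univ.pi (Function.update s i Set.univ)) ×ˢ (s i) := by
    ext ⟨x, t⟩
    simp only [Set.mem_preimage, Set.mem_pi, Set.mem_univ, forall_true_left, Set.mem_prod]
    constructor
    · intro hx
      refine ⟨fun j => ?_, by simpa using hx i⟩
      by_cases hj : j = i
      · subst hj; simp
      · simpa [Function.update_of_ne hj] using hx j
    · rintro ⟨hx, ht⟩ j
      by_cases hj : j = i
      · subst hj; simpa using ht
      · simpa [Function.update_of_ne hj] using hx j
  rw [hpre, Measure.prod_prod, Measure.pi_pi]
  have h1 : ∀ j, nu0 (Function.update s i Set.univ j)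
      = Function.update (fun k => nu0 (s k)) i (nu0 Set.univ) j := by
    intro j; exact Function.apply_update (fun _ t => nu0 t) s i Set.univ j
  simp only [h1]
  rw [Finset.prod_update_of_mem (Finset.mem_univ i)]
  rw [← Finset.mul_prod_erase Finset.univ (fun j => nu0 (s j)) (Finset.mem_univ i)]
  simp [mul_comm, Finset.erase_eq]

/-- Jensen-type inequality: the integral of the squared conditional mean is at
most the integral of the square. -/
lemma cMean_sq_le {n : ℕ} (i : Fin n) (f : (Fin n → ℝ) → ℝ) (hf : MemLp f 2 (uCube n)) :
    ∫ x, (cMean (updC i) f x) ^ 2 ∂(uCube n) ≤ intSq (uCube n) f := by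
  set μ := uCube n
  set T : (Fin n → ℝ) × ℝ → (Fin n → ℝ) := fun p => Function.update p.1 i p.2 with hT
  have mp : MeasurePreserving T (μ.prod nu0) μ := mp_update i
  have hfT : MemLp (f ∘ T) 2 (μ.prod nu0) := hf.comp_measurePreserving mp
  have hsq : Integrable (fun p => (f (T p)) ^ 2) (μ.prod nu0) := by
    simpa [Function.comp] using hfT.integrable_sq
  have hint : Integrable (f ∘ T) (μ.prod nu0) := hfT.integrable one_le_two
  have hae1 : ∀ᵐ x ∂μ, Integrable (fun t => f (T (x, t))) nu0 := hint.prod_right_ae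
  have hae2 : ∀ᵐ x ∂μ, Integrable (fun t => (f (T (x, t))) ^ 2) nu0 := hsq.prod_right_ae
  have hpt : ∀ᵐ x ∂μ, (cMean (updC i) f x) ^ 2 ≤ ∫ t, (f (T (x, t))) ^ 2 ∂nu0 := by
    filter_upwards [hae1, hae2] with x h1 h2
    have hmem : MemLp (fun t => f (T (x, t))) 2 nu0 :=
      (memLp_two_iff_integrable_sq h1.aestronglyMeasurable).2 h2
    have hv := ProbabilityTheory.variance_nonneg (fun t => f (T (x, t))) nu0
    rw [ProbabilityTheory.variance_eq_sub hmem] at hv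
    have hcm : cMean (updC i) f x = ∫ t, f (T (x, t)) ∂nu0 := rfl
    rw [hcm]
    simp only [Pi.pow_apply] at hv
    linarith
  have hR : Integrable (fun x => ∫ t, (f (T (x, t))) ^ 2 ∂nu0) μ := hsq.integral_prod_left
  have step1 : ∫ x, (cMean (updC i) f x) ^ 2 ∂μ ≤ ∫ x, ∫ t, (f (T (x, t))) ^ 2 ∂nu0 ∂μ :=
    integral_mono_of_nonneg (Filter.Eventually.of_forall fun x => sq_nonneg _) hR hpt
  have step2 : ∫ x, ∫ t, (f (T (x, t))) ^ 2 ∂nu0 ∂μ = ∫ p, (f (T p)) ^ 2 ∂(μ.prod nu0) :=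
    integral_integral hsq
  have hgm : AEStronglyMeasurable (fun x => (f x) ^ 2) μ := by
    exact hf.aestronglyMeasurable.pow 2
  have step3 : ∫ p, (f (T p)) ^ 2 ∂(μ.prod nu0) = intSq μ f := by
    unfold intSq
    have h4 : AEStronglyMeasurable (fun x => f x ^ 2) (Measure.map T (μ.prod nu0)) := by
      rw [mp.map_eq]; exact hgm
    have h5 := integral_map mp.measurable.aemeasurable h4
    rw [← h5, mp.map_eq]
  linarith

end Aux

/-- Case 1 (lower bound): for `g(x,ξ) = f(x)·h(ξ)`,
`S^g_{T,x_i} ≥ (1 − f₀²/∫f²) · S^f_{T,x_i}`, a bound independent of `h`. -/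
theorem stmt2 {n m : ℕ} (i : Fin n) (f : (Fin n → ℝ) → ℝ) (h : (Fin m → ℝ) → ℝ)
    (hf : MemLp f 2 (uCube n)) (hh : MemLp h 2 (uCube m))
    (hvf : 0 < var' (uCube n) f) (hvh : 0 < var' (uCube m) h)
    (hif : 0 < intSq (uCube n) f) :
    (1 - (mval (uCube n) f) ^ 2 / intSq (uCube n) f) * sobolT (uCube n) (updC i) f ≤
      sobolT ((uCube n).prod (uCube m)) (updF i) (fun p => f p.1 * h p.2) := by
  set μ := uCube n
  set ν := uCube m
  set F2 := intSq μ f with hF2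
  set f0 := mval μ f with hf0
  set H2 := intSq ν h with hH2
  set h0 := mval ν h with hh0
  set C := ∫ x, (cMean (updC i) f x) ^ 2 ∂μ with hC
  -- product formulas
  have E1 : intSq (μ.prod ν) (fun p => f p.1 * h p.2) = F2 * H2 := by
    unfold intSq
    simp_rw [mul_pow]
    exact integral_prod_mul (fun x => f x ^ 2) (fun y => h y ^ 2)
  have Em : mval (μ.prod ν) (fun p => f p.1 * h p.2) = f0 * h0 := by
    unfold mval
    exact integral_prod_mul f h
  have EcM : ∀ p : (Fin n → ℝ) × (Fin m → ℝ),
      cMean (updF i) (fun p => f p.1 * h p.2) p = cMean (updC i) f p.1 * h p.2 := by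
    intro p
    unfold cMean updF updC
    simp only
    rw [← integral_mul_const]
  have E2 : ∫ p, (cMean (updF i) (fun p => f p.1 * h p.2) p) ^ 2 ∂(μ.prod ν) = C * H2 := by
    simp_rw [EcM, mul_pow]
    exact integral_prod_mul (fun x => (cMean (updC i) f x) ^ 2) (fun y => h y ^ 2)
  -- scalar facts
  have hCle : C ≤ F2 := cMean_sq_le i f hf
  have hf0lt : f0 ^ 2 < F2 := by
    have := hvf; unfold var' at this; rw [← hF2, ← hf0] at this; linarith
  have hh0lt : h0 ^ 2 < H2 := by
    have := hvh; unfold var' at this; rw [← hH2, ← hh0] at this; linarith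
  have hH2pos : 0 < H2 := lt_of_le_of_lt (sq_nonneg h0) hh0lt
  have hDpos : 0 < F2 * H2 - (f0 * h0) ^ 2 := by
    have h1 : f0 ^ 2 * h0 ^ 2 ≤ f0 ^ 2 * H2 :=
      mul_le_mul_of_nonneg_left hh0lt.le (sq_nonneg f0)
    have h2 : f0 ^ 2 * H2 < F2 * H2 := by
      exact mul_lt_mul_of_pos_right hf0lt hH2pos
    have : (f0 * h0) ^ 2 = f0 ^ 2 * h0 ^ 2 := by ring
    linarith
  -- unfold sobolT on both sides
  have RHSeq : sobolT (μ.prod ν) (updF i) (fun p => f p.1 * h p.2)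
      = (F2 * H2 - C * H2) / (F2 * H2 - (f0 * h0) ^ 2) := by
    unfold sobolT tVar var'
    rw [E1, Em, E2]
  have LHSeq : (1 - f0 ^ 2 / F2) * sobolT μ (updC i) f = (F2 - C) / F2 := by
    unfold sobolT tVar var'
    rw [← hF2, ← hf0, ← hC]
    have hne : F2 ≠ 0 := ne_of_gt hif
    have hne2 : F2 - f0 ^ 2 ≠ 0 := by linarith
    field_simp
  rw [RHSeq, LHSeq]
  rw [div_le_div_iff₀ hif hDpos]
  nlinarith [mul_nonneg (mul_nonneg (sub_nonneg.2 hCle) (sq_nonneg f0)) (sq_nonneg h0),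
    sq_nonneg (f0 * h0)]
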